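/- Let λ ∈ ℝ, α > 0, a ≥ 0, and let X be a positive α-self-similar Markov process. Define T_a^{(λ)} = inf{s > 0 : X_s = a(1+αλs)^{1/α}} ∧ ζ^λ and H_a^{(λ)} = inf{s > 0 : e^{-λs} X_{τ_λ(s)} = a} where τ_λ(s) = (e^{αλs} - 1)/(αλ). Then e^{λα H_a^{(λ)}} has the same distribution as (1 + αλ T_a^{(λ)})_+, where (y)_+ = max(y,0). -/

import Mathlib

open MeasureTheory ENNReal

/-- `ζ^λ`: the lifetime bound, ∞ if λ ≥ 0 and 1/(α|λ|) if λ < 0. -/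
noncomputable def zeta (α lam : ℝ) : ℝ≥0∞ :=
  if 0 ≤ lam then ⊤ else ENNReal.ofReal (1 / (α * |lam|))

/-- The time change `τ_λ(s) = (e^{αλs} - 1)/(αλ)`. -/
noncomputable def tau (α lam s : ℝ) : ℝ := (Real.exp (α * lam * s) - 1) / (α * lam)

/-- `T_a^{(λ)}`: first time the path hits the moving boundary `a(1+αλs)^{1/α}`,
truncated at `ζ^λ`. -/
noncomputable def hitT (α lam a : ℝ) (ω : ℝ → ℝ) : ℝ≥0∞ :=
  min (sInf (ENNReal.ofReal ''
    {s : ℝ | 0 < s ∧ ω s = a * (1 + α * lam * s) ^ (1 / α)})) (zeta α lam)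

/-- `H_a^{(λ)}`: first time the dilated time-changed path `e^{-λs} ω(τ_λ(s))` hits `a`. -/
noncomputable def hitH (α lam a : ℝ) (ω : ℝ → ℝ) : ℝ≥0∞ :=
  sInf (ENNReal.ofReal ''
    {s : ℝ | 0 < s ∧ Real.exp (-lam * s) * ω (tau α lam s) = a})

section aux

private lemma tau_mono {α lam : ℝ} (hc : α * lam ≠ 0) : Monotone (tau α lam) := by
  intro x y hxy
  unfold tau
  rcases lt_or_gt_of_ne hc with h | h
  · rw [div_le_div_right_of_neg h]
    exact sub_le_sub_right (Real.exp_le_exp.2 (by nlinarith)) 1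
  · rw [div_le_div_iff_of_pos_right h]
    exact sub_le_sub_right (Real.exp_le_exp.2 (by nlinarith)) 1

private lemma tau_cont (α lam : ℝ) : Continuous (tau α lam) := by
  unfold tau; fun_prop

private lemma tau_zero (α lam : ℝ) : tau α lam 0 = 0 := by
  simp [tau]

private lemma tau_pos {α lam s : ℝ} (hc : α * lam ≠ 0) (hs : 0 < s) : 0 < tau α lam s := by
  unfold tau
  rcases lt_or_gt_of_ne hc with h | h
  · apply div_pos_of_neg_of_neg _ h
    have : Real.exp (α * lam * s) < 1 := by
      rw [show (1:ℝ) = Real.exp 0 by simp]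
      exact Real.exp_lt_exp.2 (by nlinarith)
    linarith
  · apply div_pos _ h
    have : 1 < Real.exp (α * lam * s) := by
      rw [show (1:ℝ) = Real.exp 0 by simp]
      exact Real.exp_lt_exp.2 (by nlinarith)
    linarith

private lemma one_add_mul_tau {α lam : ℝ} (hc : α * lam ≠ 0) (s : ℝ) :
    1 + α * lam * tau α lam s = Real.exp (α * lam * s) := by
  unfold tau; field_simp; rw [mul_div_cancel_left₀ _ hc]; ring

private lemma tau_lt {α lam s : ℝ} (hα : 0 < α) (hl : lam < 0) :
    tau α lam s < 1 / (α * |lam|) := by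
  have hc : α * lam < 0 := mul_neg_of_pos_of_neg hα hl
  have h1 : 1 / (α * |lam|) = -1 / (α * lam) := by
    rw [abs_of_neg hl]; ring
  rw [h1, tau, div_lt_div_right_of_neg hc]
  linarith [Real.exp_pos (α * lam * s)]

private lemma tau_surj {α lam t : ℝ} (hc : α * lam ≠ 0) (ht : 0 < t)
    (hb : 0 < lam ∨ t < 1 / (α * |lam|)) (hα : 0 < α) :
    ∃ s, 0 < s ∧ tau α lam s = t := by
  set c := α * lam with hcdef
  have hpos : 0 < 1 + c * t := by
    rcases lt_trichotomy lam 0 with hl | hl | hl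
    · have hcneg : c < 0 := mul_neg_of_pos_of_neg hα hl
      have h : t < 1 / (α * |lam|) := by
        rcases hb with h | h
        · linarith
        · exact h
      rw [abs_of_neg hl] at h
      have h2 : t * (α * -lam) < 1 := by
        rw [lt_div_iff₀ (by nlinarith)] at h
        exact h
      nlinarith
    · exact absurd (by rw [hcdef, hl, mul_zero]) hc
    · have : 0 < c := mul_pos hα hl
      nlinarith
  refine ⟨Real.log (1 + c * t) / c, ?_, ?_⟩
  · rcases lt_or_gt_of_ne hc with h | h
    · apply div_pos_of_neg_of_neg _ h
      apply Real.log_neg hpos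
      nlinarith
    · apply div_pos _ h
      apply Real.log_pos
      nlinarith
  · rw [tau, ← hcdef]
    rw [mul_div_cancel₀ _ hc, Real.exp_log hpos]
    field_simp
    ring

private lemma mem_equiv {α lam : ℝ} (a : ℝ) (hα : 0 < α) (hc : α * lam ≠ 0) (ω : ℝ → ℝ) (s : ℝ) :
    (Real.exp (-lam * s) * ω (tau α lam s) = a) ↔
      ω (tau α lam s) = a * (1 + α * lam * tau α lam s) ^ (1 / α) := by
  rw [one_add_mul_tau hc, Real.rpow_def_of_pos (Real.exp_pos _), Real.log_exp]
  have h1 : α * lam * s * (1 / α) = lam * s := by field_simp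
  rw [h1, neg_mul, Real.exp_neg, inv_mul_eq_iff_eq_mul₀ (Real.exp_ne_zero _), mul_comm a]

private lemma inf_image_ofReal {f : ℝ → ℝ≥0∞} (hf : Monotone f) (hcont : Continuous f)
    {A : Set ℝ} (hA : A.Nonempty) (hb : BddBelow A) : sInf (f '' A) = f (sInf A) :=
  (hf.map_csInf_of_continuousAt hcont.continuousAt hA hb).symm

private lemma key (α lam a : ℝ) (hα : 0 < α) (hlam : lam ≠ 0) (ω : ℝ → ℝ) :
    (if hitH α lam a ω = ⊤ then
        (if lam < 0 then 0 else (⊤ : ℝ≥0∞))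
      else ENNReal.ofReal (Real.exp (lam * α * (hitH α lam a ω).toReal)))
    = (if hitT α lam a ω = ⊤ then (⊤ : ℝ≥0∞)
      else ENNReal.ofReal (max 0 (1 + α * lam * (hitT α lam a ω).toReal))) := by
  have hc : α * lam ≠ 0 := mul_ne_zero hα.ne' hlam
  set S : Set ℝ := {s : ℝ | 0 < s ∧ Real.exp (-lam * s) * ω (tau α lam s) = a} with hS
  set T : Set ℝ := {s : ℝ | 0 < s ∧ ω s = a * (1 + α * lam * s) ^ (1 / α)} with hT
  have hST : ∀ s, 0 < s → (s ∈ S ↔ tau α lam s ∈ T) := by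
    intro s hs
    constructor
    · rintro ⟨-, h⟩
      exact ⟨tau_pos hc hs, (mem_equiv a hα hc ω s).1 h⟩
    · rintro ⟨-, h⟩
      exact ⟨hs, (mem_equiv a hα hc ω s).2 h⟩
  have hHdef : hitH α lam a ω = sInf (ENNReal.ofReal '' S) := rfl
  have hTdef : hitT α lam a ω = min (sInf (ENNReal.ofReal '' T)) (zeta α lam) := rfl
  have hofmono : Monotone ENNReal.ofReal := fun _ _ h => ENNReal.ofReal_le_ofReal h
  rcases S.eq_empty_or_nonempty with hSe | hSne
  · -- S is empty : hitH = ⊤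
    have hH : hitH α lam a ω = ⊤ := by
      rw [hHdef, hSe, Set.image_empty, sInf_empty]
    rw [if_pos hH]
    rcases lt_or_gt_of_ne hlam with hl | hl
    · -- lam < 0
      have hz : zeta α lam = ENNReal.ofReal (1 / (α * |lam|)) := if_neg (not_le.2 hl)
      have hTg : ∀ t ∈ T, 1 / (α * |lam|) ≤ t := by
        intro t htT
        by_contra hcon
        push_neg at hcon
        obtain ⟨s, hs, hts⟩ := tau_surj hc htT.1 (Or.inr hcon) hα
        have hsS : s ∈ S := (hST s hs).2 (by rw [hts]; exact htT)
        rw [hSe] at hsS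
        exact hsS
      have hge : ENNReal.ofReal (1 / (α * |lam|)) ≤ sInf (ENNReal.ofReal '' T) := by
        apply le_sInf
        rintro b ⟨t, htT, rfl⟩
        exact ENNReal.ofReal_le_ofReal (hTg t htT)
      have hT' : hitT α lam a ω = ENNReal.ofReal (1 / (α * |lam|)) := by
        rw [hTdef, hz, min_eq_right hge]
      rw [hT', if_neg ENNReal.ofReal_ne_top, if_pos hl]
      have hzr : (0:ℝ) ≤ 1 / (α * |lam|) := by positivity
      rw [ENNReal.toReal_ofReal hzr]
      have hval : 1 + α * lam * (1 / (α * |lam|)) = 0 := by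
        rw [abs_of_neg hl]
        field_simp
        ring
      rw [hval]
      simp
    · -- 0 < lam
      have hz : zeta α lam = ⊤ := if_pos hl.le
      have hTe : T = ∅ := by
        rw [Set.eq_empty_iff_forall_notMem]
        intro t htT
        obtain ⟨s, hs, hts⟩ := tau_surj hc htT.1 (Or.inl hl) hα
        have hsS : s ∈ S := (hST s hs).2 (by rw [hts]; exact htT)
        rw [hSe] at hsS
        exact hsS
      have hT' : hitT α lam a ω = ⊤ := by
        rw [hTdef, hTe, Set.image_empty, sInf_empty, hz, min_self]
      rw [hT', if_pos rfl, if_neg (not_lt.2 hl.le)]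
  · -- S nonempty
    have hbdd : BddBelow S := ⟨0, fun x hx => hx.1.le⟩
    set r := sInf S with hrdef
    have hr0 : 0 ≤ r := le_csInf hSne fun x hx => hx.1.le
    have hH : hitH α lam a ω = ENNReal.ofReal r := by
      rw [hHdef, inf_image_ofReal hofmono ENNReal.continuous_ofReal hSne hbdd]
    rw [hH, if_neg ENNReal.ofReal_ne_top, ENNReal.toReal_ofReal hr0]
    have hgmono : Monotone fun s => ENNReal.ofReal (tau α lam s) :=
      hofmono.comp (tau_mono hc)
    have hgcont : Continuous fun s => ENNReal.ofReal (tau α lam s) :=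
      ENNReal.continuous_ofReal.comp (tau_cont α lam)
    have himg : sInf ((fun s => ENNReal.ofReal (tau α lam s)) '' S)
        = ENNReal.ofReal (tau α lam r) :=
      inf_image_ofReal hgmono hgcont hSne hbdd
    have htaur_le : ∀ t ∈ T, tau α lam r ≤ t := by
      intro t htT
      have hsurj : (0 < lam ∨ t < 1 / (α * |lam|)) → tau α lam r ≤ t := by
        intro hb
        obtain ⟨s, hs, hts⟩ := tau_surj hc htT.1 hb hα
        have hsS : s ∈ S := (hST s hs).2 (by rw [hts]; exact htT)
        rw [← hts]
        exact tau_mono hc (csInf_le hbdd hsS)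
      rcases lt_or_gt_of_ne hlam with hl | hl
      · by_cases hcase : t < 1 / (α * |lam|)
        · exact hsurj (Or.inr hcase)
        · push_neg at hcase
          exact (lt_of_lt_of_le (tau_lt hα hl) hcase).le
      · exact hsurj (Or.inl hl)
    have hT' : hitT α lam a ω = ENNReal.ofReal (tau α lam r) := by
      apply le_antisymm
      · calc hitT α lam a ω ≤ sInf (ENNReal.ofReal '' T) := by rw [hTdef]; exact min_le_left _ _
          _ ≤ sInf ((fun s => ENNReal.ofReal (tau α lam s)) '' S) := by
              apply sInf_le_sInf
              rintro b ⟨s, hsS, rfl⟩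
              exact ⟨tau α lam s, (hST s hsS.1).1 hsS, rfl⟩
          _ = ENNReal.ofReal (tau α lam r) := himg
      · rw [hTdef]
        apply le_min
        · apply le_sInf
          rintro b ⟨t, htT, rfl⟩
          exact ENNReal.ofReal_le_ofReal (htaur_le t htT)
        · rcases lt_or_gt_of_ne hlam with hl | hl
          · rw [zeta, if_neg (not_le.2 hl)]
            exact ENNReal.ofReal_le_ofReal (tau_lt hα hl).le
          · rw [zeta, if_pos hl.le]
            exact le_top
    have htaur0 : 0 ≤ tau α lam r := by
      rw [← tau_zero α lam]
      exact tau_mono hc hr0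
    rw [hT', if_neg ENNReal.ofReal_ne_top, ENNReal.toReal_ofReal htaur0,
      one_add_mul_tau hc r, max_eq_right (Real.exp_pos _).le, mul_comm lam α]


end aux

/-- `e^{λα H_a^{(λ)}}` has the same distribution as `(1 + αλ T_a^{(λ)})_+`
(values in [0,∞], with the natural conventions at ∞). -/
theorem stmt15 (α lam a : ℝ) (hα : 0 < α) (ha : 0 ≤ a) (μ : Measure (ℝ → ℝ)) :
    Measure.map (fun ω => if hitH α lam a ω = ⊤ then
        (if lam < 0 then 0 else if lam = 0 then 1 else (⊤ : ℝ≥0∞))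
      else ENNReal.ofReal (Real.exp (lam * α * (hitH α lam a ω).toReal))) μ
    = Measure.map (fun ω => if lam = 0 then 1 else
        if hitT α lam a ω = ⊤ then (⊤ : ℝ≥0∞)
        else ENNReal.ofReal (max 0 (1 + α * lam * (hitT α lam a ω).toReal))) μ := by
  rcases eq_or_ne lam 0 with h0 | h0
  · subst h0
    have h1 : (fun ω => if hitH α 0 a ω = ⊤ then
        (if (0:ℝ) < 0 then 0 else if (0:ℝ) = 0 then 1 else (⊤ : ℝ≥0∞))
        else ENNReal.ofReal (Real.exp (0 * α * (hitH α 0 a ω).toReal)))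
        = fun _ => (1 : ℝ≥0∞) := by
      funext ω
      norm_num
    rw [h1]
    congr 1
    funext ω
    simp
  · have h1 : ∀ ω, (if hitH α lam a ω = ⊤ then
        (if lam < 0 then 0 else if lam = 0 then 1 else (⊤ : ℝ≥0∞))
        else ENNReal.ofReal (Real.exp (lam * α * (hitH α lam a ω).toReal)))
        = (if lam = 0 then 1 else if hitT α lam a ω = ⊤ then (⊤ : ℝ≥0∞)
        else ENNReal.ofReal (max 0 (1 + α * lam * (hitT α lam a ω).toReal))) := by
      intro ω
      simp only [if_neg h0]
      exact key α lam a hα h0 ω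
    congr 1
    exact funext h1
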